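/- Let w be an even integrable weight function on [-1,1], let (p_n) be monic-rescaled orthogonal polynomials on [-1,1] with respect to w with leading coefficients k_n and normalization p_n(a) = 1 for a fixed a ≥ 1, and let (q_n) be orthogonal polynomials on [-1,1] with respect to the weight w(x)(a² - x²) normalized by q_n(a) = 1 with leading coefficients k'_n. Then for n ≥ 2: p_n(x) - p_{n-2}(x) = (k_n/k'_{n-2})(x² - a²) q_{n-2}(x). -/

import Mathlib

open MeasureTheory

open Polynomial in
private lemma polyW_int (W : ℝ → ℝ)
    (hWint : ∀ k : ℕ, IntervalIntegrable (fun x => x ^ k * W x) volume (-1) 1)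
    (P : Polynomial ℝ) :
    IntervalIntegrable (fun x => P.eval x * W x) volume (-1) 1 := by
  induction P using Polynomial.induction_on' with
  | add p q hp hq => simpa [add_mul] using hp.add hq
  | monomial k c => simpa [eval_monomial, mul_assoc] using (hWint k).const_mul c

open Polynomial in
private lemma polyXkW_int (W : ℝ → ℝ)
    (hWint : ∀ k : ℕ, IntervalIntegrable (fun x => x ^ k * W x) volume (-1) 1)
    (P : Polynomial ℝ) (k : ℕ) :
    IntervalIntegrable (fun x => P.eval x * x ^ k * W x) volume (-1) 1 := by
  have := polyW_int W hWint (P * X ^ k)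
  simpa [eval_mul, eval_pow] using this

open Polynomial in
private lemma ortho_self_zero (W : ℝ → ℝ)
    (hW0 : ∀ x ∈ Set.Icc (-1 : ℝ) 1, 0 ≤ W x)
    (hWpos : ∀ x ∈ Set.Ioo (-1 : ℝ) 1, 0 < W x)
    (hWint : ∀ k : ℕ, IntervalIntegrable (fun x => x ^ k * W x) volume (-1) 1)
    (t : Polynomial ℝ)
    (hto : ∀ k : ℕ, k ≤ t.natDegree → ∫ x in (-1 : ℝ)..1, t.eval x * x ^ k * W x = 0) :
    t = 0 := by
  by_contra h0
  set d := t.natDegree with hd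
  -- self-inner-product is zero
  have hsum : ∫ x in (-1 : ℝ)..1, t.eval x * t.eval x * W x = 0 := by
    have hlt : t.natDegree < d + 1 := lt_add_one _
    have heq : ∀ x : ℝ, t.eval x * t.eval x * W x
        = ∑ i ∈ Finset.range (d + 1), t.coeff i * (t.eval x * x ^ i * W x) := by
      intro x
      calc t.eval x * t.eval x * W x
          = (∑ i ∈ Finset.range (d + 1), t.coeff i * x ^ i) * (t.eval x * W x) := by
            rw [← eval_eq_sum_range' hlt x]; ring
        _ = ∑ i ∈ Finset.range (d + 1), t.coeff i * (t.eval x * x ^ i * W x) := by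
            rw [Finset.sum_mul]; exact Finset.sum_congr rfl fun i _ => by ring
    simp only [heq]
    rw [intervalIntegral.integral_finset_sum
      (fun i _ => (polyXkW_int W hWint t i).const_mul _)]
    refine Finset.sum_eq_zero fun i hi => ?_
    rw [intervalIntegral.integral_const_mul, hto i (by
      have := Finset.mem_range.mp hi; omega), mul_zero]
  set μ := volume.restrict (Set.Ioc (-1 : ℝ) 1) with hμ
  have hIoc : ∀ᵐ x ∂μ, x ∈ Set.Ioc (-1 : ℝ) 1 := ae_restrict_mem measurableSet_Ioc
  have hnn : 0 ≤ᶠ[ae μ] fun x => t.eval x * t.eval x * W x :=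
    hIoc.mono fun x hx =>
      mul_nonneg (mul_self_nonneg _) (hW0 x ⟨le_of_lt hx.1, hx.2⟩)
  have hInt : Integrable (fun x => t.eval x * t.eval x * W x) μ := by
    have := (intervalIntegrable_iff_integrableOn_Ioc_of_le (by norm_num : (-1:ℝ) ≤ 1)).mp
      (polyW_int W hWint (t * t))
    simpa [eval_mul, IntegrableOn, hμ] using this
  have hzero : ∫ x, (t.eval x * t.eval x * W x) ∂μ = 0 := by
    rw [← hsum, intervalIntegral.integral_of_le (by norm_num : (-1:ℝ) ≤ 1)]
  have hae := (integral_eq_zero_iff_of_nonneg_ae hnn hInt).mp hzero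
  have hroot : ∀ᵐ x ∂μ, x ∉ {y : ℝ | t.IsRoot y} := by
    refine measure_eq_zero_iff_ae_notMem.mp (le_antisymm (le_trans ?_ le_rfl) zero_le)
    calc μ {y : ℝ | t.IsRoot y} ≤ volume {y : ℝ | t.IsRoot y} :=
          Measure.restrict_le_self _
      _ = 0 := ((Polynomial.finite_setOf_isRoot h0).measure_zero _)
  have hne1 : ∀ᵐ x ∂μ, x ∉ ({1} : Set ℝ) := by
    refine measure_eq_zero_iff_ae_notMem.mp (le_antisymm ?_ zero_le)
    calc μ ({1} : Set ℝ) ≤ volume ({1} : Set ℝ) := Measure.restrict_le_self _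
      _ = 0 := measure_singleton 1
  have hfalse : ∀ᵐ _x ∂μ, False := by
    filter_upwards [hae, hroot, hne1, hIoc] with x h1 h2 h3 h4
    have hxIoo : x ∈ Set.Ioo (-1 : ℝ) 1 :=
      ⟨h4.1, lt_of_le_of_ne h4.2 (by simpa using h3)⟩
    have hW := hWpos x hxIoo
    have ht : t.eval x ≠ 0 := h2
    have : t.eval x * t.eval x * W x ≠ 0 :=
      mul_ne_zero (mul_ne_zero ht ht) (ne_of_gt hW)
    exact this h1
  have hμ0 : μ = 0 := ae_eq_bot.mp (Filter.eventually_false_iff_eq_bot.mp hfalse)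
  have : (volume : Measure ℝ) (Set.Ioc (-1 : ℝ) 1) = 0 := by
    rw [← Measure.restrict_apply_univ, ← hμ, hμ0]; rfl
  rw [Real.volume_Ioc] at this
  norm_num at this

open Polynomial in
private lemma ortho_unique (W : ℝ → ℝ)
    (hW0 : ∀ x ∈ Set.Icc (-1 : ℝ) 1, 0 ≤ W x)
    (hWpos : ∀ x ∈ Set.Ioo (-1 : ℝ) 1, 0 < W x)
    (hWint : ∀ k : ℕ, IntervalIntegrable (fun x => x ^ k * W x) volume (-1) 1)
    (m : ℕ) (r s : Polynomial ℝ) (hr : r.natDegree ≤ m) (hs : s.natDegree ≤ m)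
    (hs0 : s.coeff m ≠ 0)
    (hro : ∀ k < m, ∫ x in (-1 : ℝ)..1, r.eval x * x ^ k * W x = 0)
    (hso : ∀ k < m, ∫ x in (-1 : ℝ)..1, s.eval x * x ^ k * W x = 0) :
    r = Polynomial.C (r.coeff m / s.coeff m) * s := by
  set c := r.coeff m / s.coeff m with hc
  set t := r - C c * s with ht
  suffices h : t = 0 by
    have : r - C c * s = 0 := by rw [← ht, h]
    linear_combination (norm := ring_nf) this
  have htm : t.coeff m = 0 := by
    simp [ht, hc, coeff_sub, coeff_C_mul, div_mul_cancel₀ _ hs0]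
  have htdeg : t.natDegree ≤ m :=
    le_trans (natDegree_sub_le _ _)
      (max_le hr (le_trans (natDegree_C_mul_le _ _) hs))
  by_contra h0
  have hdeg : t.natDegree < m := by
    rcases lt_or_eq_of_le htdeg with h | h
    · exact h
    · exact absurd (leadingCoeff_eq_zero.mp (by rw [leadingCoeff, h]; exact htm)) h0
  exact h0 (ortho_self_zero W hW0 hWpos hWint t (fun k hk => by
    have hkm : k < m := lt_of_le_of_lt hk hdeg
    have h1 : ∀ x : ℝ, t.eval x * x ^ k * W x
        = r.eval x * x ^ k * W x - c * (s.eval x * x ^ k * W x) := by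
      intro x; simp only [ht, eval_sub, eval_mul, eval_C]; ring
    simp only [h1]
    rw [intervalIntegral.integral_sub (polyXkW_int W hWint r k)
      ((polyXkW_int W hWint s k).const_mul c),
      hro k hkm, intervalIntegral.integral_const_mul, hso k hkm]
    ring))

/-- If `(p_n)` are orthogonal polynomials on `[-1,1]` for an even weight `w`, normalized by
`p_n(a) = 1` with `a ≥ 1`, and `(Q_n)` are orthogonal polynomials for the weight
`w(x)(a²-x²)` normalized by `Q_n(a) = 1`, then for `n ≥ 2`,
`p_n(x) - p_{n-2}(x) = (k_n/k'_{n-2})(x² - a²) Q_{n-2}(x)`,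
where `k_n`, `k'_{n-2}` are the leading coefficients of `p_n`, `Q_{n-2}`. -/
theorem even_weight_difference_formula
    (w : ℝ → ℝ) (a : ℝ) (p Q : ℕ → Polynomial ℝ)
    (hw_even : ∀ x, w (-x) = w x)
    (hw_nonneg : ∀ x ∈ Set.Icc (-1 : ℝ) 1, 0 ≤ w x)
    (hw_pos : ∀ x ∈ Set.Ioo (-1 : ℝ) 1, 0 < w x)
    (hw_int : ∀ k : ℕ, IntervalIntegrable (fun x => x ^ k * w x) volume (-1) 1)
    (ha : 1 ≤ a)
    (hpdeg : ∀ n, (p n).natDegree = n)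
    (hporth : ∀ n k, k < n → ∫ x in (-1 : ℝ)..1, (p n).eval x * x ^ k * w x = 0)
    (hpnorm : ∀ n, (p n).eval a = 1)
    (hQdeg : ∀ n, (Q n).natDegree = n)
    (hQorth : ∀ n k, k < n →
      ∫ x in (-1 : ℝ)..1, (Q n).eval x * x ^ k * (w x * (a ^ 2 - x ^ 2)) = 0)
    (hQnorm : ∀ n, (Q n).eval a = 1)
    (n : ℕ) (hn : 2 ≤ n) :
    ∀ x : ℝ, (p n).eval x - (p (n - 2)).eval x =
      (p n).coeff n / (Q (n - 2)).coeff (n - 2) * (x ^ 2 - a ^ 2) * (Q (n - 2)).eval x := by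
  classical
  open Polynomial in
  obtain ⟨m, rfl⟩ : ∃ m, n = m + 2 := ⟨n - 2, by omega⟩
  have hm2 : m + 2 - 2 = m := by omega
  rw [hm2]
  -- nonvanishing of leading coefficients
  have hpne : ∀ j, p j ≠ 0 := fun j hj => by
    have := hpnorm j; rw [hj] at this; simp at this
  have hkp : ∀ j, (p j).coeff j ≠ 0 := fun j h =>
    hpne j (leadingCoeff_eq_zero.mp (by rwa [leadingCoeff, hpdeg j]))
  have hQne : Q m ≠ 0 := fun hj => by
    have := hQnorm m; rw [hj] at this; simp at this
  have hkQ : (Q m).coeff m ≠ 0 := fun h =>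
    hQne (leadingCoeff_eq_zero.mp (by rwa [leadingCoeff, hQdeg m]))
  -- parity: p_j(-a) = (-1)^j
  have parity : ∀ j : ℕ, (p j).eval (-a) = (-1 : ℝ) ^ j := by
    intro j
    set pt := (p j).comp (-X) with hpt
    have hnegX : (-X : ℝ[X]).natDegree = 1 := by simp
    have hdeg' : pt.natDegree = j := by
      rw [hpt, natDegree_comp, hnegX, hpdeg j, mul_one]
    have hlead : pt.coeff j = (-1 : ℝ) ^ j * (p j).coeff j := by
      have h1 : pt.leadingCoeff = (p j).leadingCoeff * (-1 : ℝ) ^ (p j).natDegree := by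
        rw [hpt, leadingCoeff_comp (by rw [hnegX]; norm_num)]
        congr 1
        simp [leadingCoeff, hnegX]
      rw [leadingCoeff, hdeg'] at h1
      rw [h1, leadingCoeff, hpdeg j]; ring
    have hptorth : ∀ k < j, ∫ x in (-1 : ℝ)..1, pt.eval x * x ^ k * w x = 0 := by
      intro k hk
      have keyfun : (fun x : ℝ => pt.eval x * x ^ k * w x)
          = fun x => (fun y => (p j).eval y * (-y) ^ k * w (-y)) (-x) := by
        funext x; simp [hpt, eval_comp]
      rw [keyfun, intervalIntegral.integral_comp_neg
        (fun y => (p j).eval y * (-y) ^ k * w (-y))]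
      have h2 : (fun y : ℝ => (p j).eval y * (-y) ^ k * w (-y))
          = fun y => (-1 : ℝ) ^ k * ((p j).eval y * y ^ k * w y) := by
        funext y; rw [hw_even]; ring
      have h3 : ∫ y in (-(1:ℝ))..(-(-1:ℝ)), (p j).eval y * (-y) ^ k * w (-y)
          = ∫ y in (-1:ℝ)..1, (-1:ℝ) ^ k * ((p j).eval y * y ^ k * w y) := by
        rw [h2]; norm_num
      rw [h3, intervalIntegral.integral_const_mul, hporth j k hk, mul_zero]
    have key := ortho_unique w hw_nonneg hw_pos hw_int j pt (p j)
      (le_of_eq hdeg') (le_of_eq (hpdeg j)) (hkp j) hptorth (hporth j)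
    have hc : pt.coeff j / (p j).coeff j = (-1 : ℝ) ^ j := by
      rw [hlead, mul_div_assoc, div_self (hkp j), mul_one]
    have heval : pt.eval a = (p j).eval (-a) := by
      rw [hpt, eval_comp]; simp
    have := congrArg (eval a) key
    rw [heval, eval_mul, eval_C, hc, hpnorm j, mul_one] at this
    exact this
  -- the difference polynomial
  set d := p (m + 2) - p m with hddef
  have hd_a : d.eval a = 0 := by simp [hddef, hpnorm]
  have hd_na : d.eval (-a) = 0 := by
    simp only [hddef, eval_sub, parity]
    ring
  -- factor out (X - a)(X + a)
  obtain ⟨e, he⟩ := dvd_iff_isRoot.mpr hd_a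
  have hea : e.eval (-a) = 0 := by
    have := hd_na
    rw [he, eval_mul, eval_sub, eval_X, eval_C] at this
    have hne : (-a) - a ≠ 0 := by intro h; nlinarith
    exact (mul_eq_zero.mp this).resolve_left hne
  obtain ⟨r, hr⟩ := dvd_iff_isRoot.mpr hea
  have hfact : d = (X ^ 2 - C a ^ 2) * r := by
    rw [he, hr, map_neg]; ring
  -- coefficient and degree bookkeeping
  have hdn : d.coeff (m + 2) = (p (m + 2)).coeff (m + 2) := by
    have hz : (p m).coeff (m + 2) = 0 :=
      coeff_eq_zero_of_natDegree_lt (by rw [hpdeg m]; omega)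
    rw [hddef, coeff_sub, hz, sub_zero]
  have hX2ne : (X ^ 2 - C a ^ 2 : ℝ[X]) ≠ 0 := by
    have : (X ^ 2 - C a ^ 2 : ℝ[X]) = X ^ 2 - C (a ^ 2) := by rw [← C_pow]
    rw [this]
    exact (monic_X_pow_sub_C (a ^ 2) (by norm_num)).ne_zero
  have hX2deg : (X ^ 2 - C a ^ 2 : ℝ[X]).natDegree = 2 := by
    have : (X ^ 2 - C a ^ 2 : ℝ[X]) = X ^ 2 - C (a ^ 2) := by rw [← C_pow]
    rw [this, natDegree_X_pow_sub_C]
  have hX2monic : (X ^ 2 - C a ^ 2 : ℝ[X]).Monic := by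
    have : (X ^ 2 - C a ^ 2 : ℝ[X]) = X ^ 2 - C (a ^ 2) := by rw [← C_pow]
    rw [this]
    exact monic_X_pow_sub_C (a ^ 2) (by norm_num)
  have hrne : r ≠ 0 := by
    rintro rfl
    rw [mul_zero] at hfact
    rw [hfact] at hdn
    exact hkp (m + 2) hdn.symm
  have hddeg : d.natDegree = m + 2 := by
    apply le_antisymm
    · exact le_trans (natDegree_sub_le _ _)
        (max_le (le_of_eq (hpdeg (m + 2))) (by rw [hpdeg m]; omega))
    · exact le_natDegree_of_ne_zero (hdn ▸ hkp (m + 2))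
  have hrdeg : r.natDegree = m := by
    have := natDegree_mul hX2ne hrne
    rw [← hfact, hddeg, hX2deg] at this
    omega
  have hrc : r.coeff m = (p (m + 2)).coeff (m + 2) := by
    rw [← hdn]
    have h1 : d.leadingCoeff = (X ^ 2 - C a ^ 2 : ℝ[X]).leadingCoeff * r.leadingCoeff := by
      rw [hfact]; exact leadingCoeff_mul _ _
    rw [hX2monic.leadingCoeff, one_mul] at h1
    calc r.coeff m = r.leadingCoeff := by rw [leadingCoeff, hrdeg]
      _ = d.leadingCoeff := h1.symm
      _ = d.coeff (m + 2) := by rw [leadingCoeff, hddeg]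
  -- orthogonality of r w.r.t. w(x)(a²-x²)
  set W2 := fun x : ℝ => w x * (a ^ 2 - x ^ 2) with hW2
  have hW2_0 : ∀ x ∈ Set.Icc (-1 : ℝ) 1, 0 ≤ W2 x := fun x hx => by
    have h1 := hw_nonneg x hx
    have : x ^ 2 ≤ a ^ 2 := by nlinarith [hx.1, hx.2]
    simp only [hW2]
    nlinarith
  have hW2pos : ∀ x ∈ Set.Ioo (-1 : ℝ) 1, 0 < W2 x := fun x hx => by
    have h1 := hw_pos x hx
    have : x ^ 2 < a ^ 2 := by nlinarith [hx.1, hx.2]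
    simp only [hW2]
    nlinarith
  have hW2int : ∀ k : ℕ, IntervalIntegrable (fun x => x ^ k * W2 x) volume (-1) 1 := by
    intro k
    have heq : (fun x : ℝ => x ^ k * W2 x)
        = fun x => a ^ 2 * (x ^ k * w x) - x ^ (k + 2) * w x := by
      funext x; simp only [hW2]; ring
    rw [heq]
    exact ((hw_int k).const_mul _).sub (hw_int (k + 2))
  have hro : ∀ k < m, ∫ x in (-1 : ℝ)..1, r.eval x * x ^ k * W2 x = 0 := by
    intro k hk
    have hdev : ∀ x : ℝ, d.eval x = (x ^ 2 - a ^ 2) * r.eval x := by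
      intro x; rw [hfact]; simp [eval_mul, eval_sub, eval_pow, eval_C]
    have h1 : ∀ x : ℝ, r.eval x * x ^ k * W2 x = -(d.eval x * x ^ k * w x) := by
      intro x; rw [hdev x]; simp only [hW2]; ring
    simp only [h1]
    rw [intervalIntegral.integral_neg]
    have h2 : ∀ x : ℝ, d.eval x * x ^ k * w x
        = (p (m + 2)).eval x * x ^ k * w x - (p m).eval x * x ^ k * w x := by
      intro x; simp only [hddef, eval_sub]; ring
    simp only [h2]
    rw [intervalIntegral.integral_sub (polyXkW_int w hw_int _ k) (polyXkW_int w hw_int _ k),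
      hporth (m + 2) k (by omega), hporth m k hk]
    norm_num
  have hQo : ∀ k < m, ∫ x in (-1 : ℝ)..1, (Q m).eval x * x ^ k * W2 x = 0 := by
    intro k hk
    simpa only [hW2] using hQorth m k hk
  have key := ortho_unique W2 hW2_0 hW2pos hW2int m r (Q m)
    (le_of_eq hrdeg) (le_of_eq (hQdeg m)) hkQ hro hQo
  -- conclusion
  intro x
  have hdev : d.eval x = (x ^ 2 - a ^ 2) * r.eval x := by
    rw [hfact]; simp [eval_mul, eval_sub, eval_pow, eval_C]
  have hrev : r.eval x = (p (m + 2)).coeff (m + 2) / (Q m).coeff m * (Q m).eval x := by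
    rw [key]; rw [eval_mul, eval_C, hrc]
  have : (p (m + 2)).eval x - (p m).eval x = d.eval x := by simp [hddef]
  rw [this, hdev, hrev]
  ring
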